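/- The following second-order differential identity of formal power series in ℚ[[q]] holds for the extra generator 𝒬: (d/du)²𝒬 = −2𝒳·(d/du)𝒬 − (4𝒳₂ + 2𝒳² + (15/4)𝒵₂)·𝒬 − (5/2)(2𝒵₁𝒳₂ + 𝒵₁𝒳² + 𝒵₂𝒳) − (125/24)𝒵₁𝒵₂ − (5/24)𝒵₃. -/

import Mathlib

noncomputable section

/-- The operator `q·d/dq` on formal power series in `q`. -/
def qd (f : PowerSeries ℚ) : PowerSeries ℚ :=
  PowerSeries.mk fun n => (n : ℚ) * PowerSeries.coeff n f

/-- `I₀(q) = Σ_{d≥0} ((5d)!/(d!)⁵) q^d`. -/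
def I0 : PowerSeries ℚ :=
  PowerSeries.mk fun d => (Nat.factorial (5 * d) : ℚ) / ((Nat.factorial d : ℚ)) ^ 5

/-- `I₁(q) = Σ_{d≥1} ((5d)!/(d!)⁵)(5 Σ_{j=d+1}^{5d} 1/j) q^d`. -/
def I1 : PowerSeries ℚ :=
  PowerSeries.mk fun d =>
    (Nat.factorial (5 * d) : ℚ) / ((Nat.factorial d : ℚ)) ^ 5 *
      (5 * ∑ j ∈ Finset.Icc (d + 1) (5 * d), (1 : ℚ) / j)

/-- `I_{1,1} = 1 + q·d/dq (I₁/I₀)`. -/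
def I11 : PowerSeries ℚ := 1 + qd (I1 * I0⁻¹)

/-- The operator `d/du = (1/L)·q·d/dq`. -/
def du (L f : PowerSeries ℚ) : PowerSeries ℚ := L⁻¹ * qd f

/-- The generators `𝒳_k`: `𝒳₁ = (d/du) log(I₀/L)` and `𝒳_{k+1} = (d/du) 𝒳_k`. -/
def Xg (L : PowerSeries ℚ) : ℕ → PowerSeries ℚ
  | 0 => 0
  | 1 => L⁻¹ * (qd I0 * I0⁻¹ - qd L * L⁻¹)
  | (k + 2) => du L (Xg L (k + 1))

/-- The generators `𝒴_k`: `𝒴₁ = (d/du) log(I₀·I_{1,1}/L²)` and `𝒴_{k+1} = (d/du) 𝒴_k`. -/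
def Yg (L : PowerSeries ℚ) : ℕ → PowerSeries ℚ
  | 0 => 0
  | 1 => L⁻¹ * (qd I0 * I0⁻¹ + qd I11 * I11⁻¹ - 2 * (qd L * L⁻¹))
  | (k + 2) => du L (Yg L (k + 1))

/-- The generators `𝒵_k`: `𝒵₁ = (d/du) log(q^{1/5}·L)` and `𝒵_{k+1} = (d/du) 𝒵_k`. -/
def Zg (L : PowerSeries ℚ) : ℕ → PowerSeries ℚ
  | 0 => 0
  | 1 => L⁻¹ * (qd L * L⁻¹ + PowerSeries.C (1 / 5 : ℚ))
  | (k + 2) => du L (Zg L (k + 1))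


/-- `I_{1;a}(q) = -Σ_{d≥1} ((5d)!/(d!)⁵)(Σ_{j=1}^{5d} 1/j) q^d`. -/
def I1a : PowerSeries ℚ :=
  PowerSeries.mk fun d =>
    -((Nat.factorial (5 * d) : ℚ) / ((Nat.factorial d : ℚ)) ^ 5 *
      ∑ j ∈ Finset.Icc 1 (5 * d), (1 : ℚ) / j)

/-- `I_{1,1;a} = q·d/dq (I_{1;a}/I₀)`. -/
def I11a : PowerSeries ℚ := qd (I1a * I0⁻¹)

/-- The extra generator `𝒬 = (1/L)(I_{1,1;a} - 1/5)`. -/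
def Qg (L : PowerSeries ℚ) : PowerSeries ℚ :=
  L⁻¹ * (I11a - PowerSeries.C (1 / 5 : ℚ))

section Helpers
open PowerSeries Finset


lemma coeff_qd (n : ℕ) (f : PowerSeries ℚ) : coeff n (qd f) = (n : ℚ) * coeff n f :=
  coeff_mk _ _

lemma qd_const (f : PowerSeries ℚ) : constantCoeff (R := ℚ) (qd f) = 0 := by
  rw [← coeff_zero_eq_constantCoeff, coeff_qd]; simp

lemma qd_add (f g : PowerSeries ℚ) : qd (f + g) = qd f + qd g := by
  ext n; simp [coeff_qd, mul_add]

lemma qd_neg (f : PowerSeries ℚ) : qd (-f) = -qd f := by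
  ext n; simp [coeff_qd]

lemma qd_sub (f g : PowerSeries ℚ) : qd (f - g) = qd f - qd g := by
  ext n; simp [coeff_qd, mul_sub]

lemma qd_C (a : ℚ) : qd ((PowerSeries.C (R := ℚ)) a) = 0 := by
  ext n; rw [coeff_qd, PowerSeries.coeff_C]
  rcases n with _ | m <;> simp

lemma qd_zero : qd (0 : PowerSeries ℚ) = 0 := by
  ext n; simp [coeff_qd]

lemma qd_one : qd (1 : PowerSeries ℚ) = 0 := by
  rw [← map_one ((PowerSeries.C (R := ℚ))), qd_C]

lemma qd_ofNat (n : ℕ) [n.AtLeastTwo] :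
    qd (no_index (OfNat.ofNat n) : PowerSeries ℚ) = 0 := by
  rw [← map_ofNat ((PowerSeries.C (R := ℚ))) n, qd_C]

lemma qd_X : qd (PowerSeries.X : PowerSeries ℚ) = PowerSeries.X := by
  ext n; rw [coeff_qd, PowerSeries.coeff_X]
  split_ifs with h
  · subst h; norm_num
  · simp

lemma qd_mul (f g : PowerSeries ℚ) : qd (f * g) = qd f * g + f * qd g := by
  ext n
  rw [coeff_qd, map_add, PowerSeries.coeff_mul, PowerSeries.coeff_mul, PowerSeries.coeff_mul,
    Finset.mul_sum, ← Finset.sum_add_distrib]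
  refine Finset.sum_congr rfl fun p hp => ?_
  rw [Finset.HasAntidiagonal.mem_antidiagonal] at hp
  rw [coeff_qd, coeff_qd, ← hp]
  push_cast
  ring

lemma qd_sq (f : PowerSeries ℚ) : qd (f ^ 2) = 2 * f * qd f := by
  rw [show f ^ 2 = f * f by ring, qd_mul]; ring

lemma qd_pow5 (f : PowerSeries ℚ) : qd (f ^ 5) = 5 * f ^ 4 * qd f := by
  rw [show f ^ 5 = f * (f * (f * (f * f))) by ring]
  simp only [qd_mul]; ring

lemma eq_zero_of_qd (f β : PowerSeries ℚ) (hβ : constantCoeff (R := ℚ) β = 0)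
    (h0 : constantCoeff (R := ℚ) f = 0) (h : qd f = β * f) : f = 0 := by
  ext n
  induction n using Nat.strong_induction_on with
  | _ n ih =>
    rcases n with _ | k
    · simpa [PowerSeries.coeff_zero_eq_constantCoeff] using h0
    · have hc := congrArg (coeff (k + 1)) h
      rw [coeff_qd, PowerSeries.coeff_mul] at hc
      rw [Finset.sum_eq_zero] at hc
      · have : ((k : ℚ) + 1) ≠ 0 := by positivity
        simpa [this] using hc
      · intro p hp
        rw [Finset.HasAntidiagonal.mem_antidiagonal] at hp
        rcases eq_or_lt_of_le (show p.2 ≤ k + 1 by omega) with h2 | h2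
        · have : p.1 = 0 := by omega
          rw [this, PowerSeries.coeff_zero_eq_constantCoeff, hβ, zero_mul]
        · rw [ih p.2 h2]; simp


lemma factstep (m : ℕ) : (Nat.factorial (5*m+5) : ℚ)
    = (5*(m:ℚ)+5)*(5*(m:ℚ)+4)*(5*(m:ℚ)+3)*(5*(m:ℚ)+2)*(5*(m:ℚ)+1) * (Nat.factorial (5*m) : ℚ) := by
  have f1 : Nat.factorial (5*m+1) = (5*m+1) * Nat.factorial (5*m) := Nat.factorial_succ _
  have f2 : Nat.factorial (5*m+2) = (5*m+2) * Nat.factorial (5*m+1) := by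
    rw [show 5*m+2 = (5*m+1)+1 by omega]; exact Nat.factorial_succ _
  have f3 : Nat.factorial (5*m+3) = (5*m+3) * Nat.factorial (5*m+2) := by
    rw [show 5*m+3 = (5*m+2)+1 by omega]; exact Nat.factorial_succ _
  have f4 : Nat.factorial (5*m+4) = (5*m+4) * Nat.factorial (5*m+3) := by
    rw [show 5*m+4 = (5*m+3)+1 by omega]; exact Nat.factorial_succ _
  have f5 : Nat.factorial (5*m+5) = (5*m+5) * Nat.factorial (5*m+4) := by
    rw [show 5*m+5 = (5*m+4)+1 by omega]; exact Nat.factorial_succ _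
  rw [f5, f4, f3, f2, f1]
  push_cast
  ring

lemma cstep (m : ℕ) : ((Nat.factorial (5*m+5) : ℚ) / ((Nat.factorial (m+1) : ℚ))^5)
    = 5*(5*(m:ℚ)+1)*(5*(m:ℚ)+2)*(5*(m:ℚ)+3)*(5*(m:ℚ)+4)
      * ((Nat.factorial (5*m) : ℚ) / ((Nat.factorial m : ℚ))^5) / ((m:ℚ)+1)^4 := by
  rw [factstep, Nat.factorial_succ m]
  have hm : (Nat.factorial m : ℚ) ≠ 0 := Nat.cast_ne_zero.mpr (Nat.factorial_ne_zero m)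
  have hm1 : ((m:ℚ)+1) ≠ 0 := by positivity
  push_cast
  field_simp

lemma hR1 : qd (qd (qd (qd I0))) = PowerSeries.C (3125 : ℚ) * (PowerSeries.X * qd (qd (qd (qd I0))))
    + PowerSeries.X * (PowerSeries.C (6250 : ℚ) * qd (qd (qd I0)) + PowerSeries.C (4375 : ℚ) * qd (qd I0)
      + PowerSeries.C (1250 : ℚ) * qd I0 + PowerSeries.C (120 : ℚ) * I0) := by
  ext n
  rcases n with _ | m
  · simp [coeff_qd]
  · have hm1 : ((m:ℚ)+1) ≠ 0 := by positivity
    have hm : (Nat.factorial m : ℚ) ≠ 0 := Nat.cast_ne_zero.mpr (Nat.factorial_ne_zero m)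
    simp only [Nat.succ_eq_add_one, map_add, coeff_C_mul, coeff_succ_X_mul, coeff_qd, I0,
      coeff_mk]
    rw [show 5*(m+1) = 5*m+5 by ring, cstep]
    push_cast
    field_simp
    ring

lemma hsplit (m : ℕ) : (∑ j ∈ Finset.Icc 1 (5*m+5), (1:ℚ)/j)
    = (∑ j ∈ Finset.Icc 1 (5*m), (1:ℚ)/j) + 1/(5*(m:ℚ)+1) + 1/(5*(m:ℚ)+2)
      + 1/(5*(m:ℚ)+3) + 1/(5*(m:ℚ)+4) + 1/(5*(m:ℚ)+5) := by
  rw [show 5*m+5 = (5*m+4)+1 by omega, Finset.sum_Icc_succ_top (by omega),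
     show 5*m+4 = (5*m+3)+1 by omega, Finset.sum_Icc_succ_top (by omega),
     show 5*m+3 = (5*m+2)+1 by omega, Finset.sum_Icc_succ_top (by omega),
     show 5*m+2 = (5*m+1)+1 by omega, Finset.sum_Icc_succ_top (by omega),
     show 5*m+1 = (5*m)+1 by omega, Finset.sum_Icc_succ_top (by omega)]
  push_cast
  ring

lemma hR2 : PowerSeries.C (5 : ℚ) * qd (qd (qd (qd I1a)))
    = PowerSeries.C (15625 : ℚ) * (PowerSeries.X * qd (qd (qd (qd I1a))))
    + PowerSeries.X * (PowerSeries.C (31250 : ℚ) * qd (qd (qd I1a)) + PowerSeries.C (21875 : ℚ) * qd (qd I1a)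
      + PowerSeries.C (6250 : ℚ) * qd I1a + PowerSeries.C (600 : ℚ) * I1a)
    - PowerSeries.X * (PowerSeries.C (12500 : ℚ) * qd (qd (qd I0)) + PowerSeries.C (18750 : ℚ) * qd (qd I0)
      + PowerSeries.C (8750 : ℚ) * qd I0 + PowerSeries.C (1250 : ℚ) * I0)
    - qd (qd (qd I0)) := by
  ext n
  rcases n with _ | m
  · simp [coeff_qd, qd, PowerSeries.constantCoeff_mk]
  · have hm1 : ((m:ℚ)+1) ≠ 0 := by positivity
    have hm : (Nat.factorial m : ℚ) ≠ 0 := Nat.cast_ne_zero.mpr (Nat.factorial_ne_zero m)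
    have d1 : (5*(m:ℚ)+1) ≠ 0 := by positivity
    have d2 : (5*(m:ℚ)+2) ≠ 0 := by positivity
    have d3 : (5*(m:ℚ)+3) ≠ 0 := by positivity
    have d4 : (5*(m:ℚ)+4) ≠ 0 := by positivity
    have d5 : (5*(m:ℚ)+5) ≠ 0 := by positivity
    simp only [Nat.succ_eq_add_one, map_add, map_sub, coeff_C_mul, coeff_succ_X_mul, coeff_qd,
      I0, I1a, coeff_mk]
    rw [show 5*(m+1) = 5*m+5 by ring, cstep, hsplit]
    push_cast
    field_simp
    ring

end Helpers
set_option maxHeartbeats 4000000 in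
/-- The second-order differential identity for the extra generator `𝒬`:
`(d/du)²𝒬 = -2𝒳·(d/du)𝒬 - (4𝒳₂ + 2𝒳² + (15/4)𝒵₂)·𝒬
  - (5/2)(2𝒵₁𝒳₂ + 𝒵₁𝒳² + 𝒵₂𝒳) - (125/24)𝒵₁𝒵₂ - (5/24)𝒵₃`. -/
theorem statement6 (L : PowerSeries ℚ)
    (hc : PowerSeries.constantCoeff L = 1)
    (hL : L ^ 5 * (1 - 5 ^ 5 * PowerSeries.X) = 1) :
    du L (du L (Qg L)) =
      -2 * Xg L 1 * du L (Qg L)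
        - (4 * Xg L 2 + 2 * (Xg L 1) ^ 2 + PowerSeries.C (15 / 4 : ℚ) * Zg L 2) * Qg L
        - PowerSeries.C (5 / 2 : ℚ) *
            (2 * Zg L 1 * Xg L 2 + Zg L 1 * (Xg L 1) ^ 2 + Zg L 2 * Xg L 1)
        - PowerSeries.C (125 / 24 : ℚ) * Zg L 1 * Zg L 2
        - PowerSeries.C (5 / 24 : ℚ) * Zg L 3 := by
  classical
  have hLc : PowerSeries.constantCoeff (R := ℚ) L ≠ 0 := by rw [hc]; exact one_ne_zero
  have hu : L * L⁻¹ = 1 := PowerSeries.mul_inv_cancel _ hLc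
  have hI0c : PowerSeries.constantCoeff (R := ℚ) I0 = 1 := by
    simp [I0, PowerSeries.constantCoeff_mk, Nat.factorial]
  have hI0ne : PowerSeries.constantCoeff (R := ℚ) I0 ≠ 0 := by rw [hI0c]; exact one_ne_zero
  have hv : I0 * I0⁻¹ = 1 := PowerSeries.mul_inv_cancel _ hI0ne
  have hI1a0 : PowerSeries.constantCoeff (R := ℚ) I1a = 0 := by
    simp [I1a, PowerSeries.constantCoeff_mk]
  have h5 : (5 : PowerSeries ℚ) * PowerSeries.C ((1/5 : ℚ)) = 1 := by
    rw [← map_ofNat ((PowerSeries.C (R := ℚ))) 5, ← map_mul, ← map_one ((PowerSeries.C (R := ℚ)))]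
    exact congrArg ((PowerSeries.C (R := ℚ))) (by norm_num)
  have h154 : (4 : PowerSeries ℚ) * PowerSeries.C ((15/4 : ℚ)) = 15 := by
    rw [← map_ofNat ((PowerSeries.C (R := ℚ))) 4, ← map_mul, ← map_ofNat ((PowerSeries.C (R := ℚ))) 15]
    exact congrArg ((PowerSeries.C (R := ℚ))) (by norm_num)
  have h52 : (2 : PowerSeries ℚ) * PowerSeries.C ((5/2 : ℚ)) = 5 := by
    rw [← map_ofNat ((PowerSeries.C (R := ℚ))) 2, ← map_mul, ← map_ofNat ((PowerSeries.C (R := ℚ))) 5]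
    exact congrArg ((PowerSeries.C (R := ℚ))) (by norm_num)
  have h12524 : (24 : PowerSeries ℚ) * PowerSeries.C ((125/24 : ℚ)) = 125 := by
    rw [← map_ofNat ((PowerSeries.C (R := ℚ))) 24, ← map_mul, ← map_ofNat ((PowerSeries.C (R := ℚ))) 125]
    exact congrArg ((PowerSeries.C (R := ℚ))) (by norm_num)
  have h524 : (24 : PowerSeries ℚ) * PowerSeries.C ((5/24 : ℚ)) = 5 := by
    rw [← map_ofNat ((PowerSeries.C (R := ℚ))) 24, ← map_mul, ← map_ofNat ((PowerSeries.C (R := ℚ))) 5]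
    exact congrArg ((PowerSeries.C (R := ℚ))) (by norm_num)
  have qd_five : qd (5 : PowerSeries ℚ) = 0 := by
    rw [← map_ofNat ((PowerSeries.C (R := ℚ))) 5, qd_C]
  have e0 : qd (L ^ 5 * (1 - 5 ^ 5 * PowerSeries.X)) = 0 := by rw [hL, qd_one]
  simp only [qd_mul, qd_sub, qd_one, qd_ofNat, qd_five, qd_X, qd_pow5] at e0
  have h2 : (5 : PowerSeries ℚ) * qd L = L*L*L*L*L*L - L := by
    linear_combination L * e0 - (5 * qd L + L) * hL
  have hqdL : qd L = PowerSeries.C ((1/5 : ℚ)) * (L*L*L*L*L*L - L) := by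
    linear_combination PowerSeries.C ((1/5 : ℚ)) * h2 - qd L * h5
  have e1 : qd (L * L⁻¹) = 0 := by rw [hu, qd_one]
  rw [qd_mul] at e1
  have h3 : (5 : PowerSeries ℚ) * qd L⁻¹ = L⁻¹ - L*L*L*L := by
    linear_combination 5 * L⁻¹ * e1 - L⁻¹^2 * h2 + (-(L*L*L*L)*(L*L⁻¹+1) + L⁻¹ - 5*qd L⁻¹) * hu
  have hqdiL : qd L⁻¹ = PowerSeries.C ((1/5 : ℚ)) * (L⁻¹ - L*L*L*L) := by
    linear_combination PowerSeries.C ((1/5 : ℚ)) * h3 - qd L⁻¹ * h5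
  have e2 : qd (I0 * I0⁻¹) = 0 := by rw [hv, qd_one]
  rw [qd_mul] at e2
  have hqdJ : qd I0⁻¹ = -(I0⁻¹ * I0⁻¹ * qd I0) := by
    linear_combination I0⁻¹ * e2 - qd I0⁻¹ * hv
  have hR1' := hR1
  have hR2' := hR2
  simp only [map_ofNat] at hR1' hR2'
  have hP0 : PowerSeries.constantCoeff (R := ℚ) (50 * (qd (qd I0)) * (qd I1a) - 50 * (qd I0) * (qd (qd I1a)) + 20 * (qd I0)^2 - 50 * I1a * (qd (qd (qd I0))) - 50 * I1a * (qd (qd I0)) - 20 * I1a * (qd I0) + 50 * I0 * (qd (qd (qd I1a))) + 50 * I0 * (qd (qd I1a)) + 20 * I0 * (qd I1a) - 40 * I0 * (qd (qd I0)) - 20 * I0 * (qd I0) - 4 * I0^2 - 25 * L^5 * (qd I0)^2 + 50 * L^5 * I1a * (qd (qd I0)) + 20 * L^5 * I1a * (qd I0) - 50 * L^5 * I0 * (qd (qd I1a)) - 20 * L^5 * I0 * (qd I1a) + 50 * L^5 * I0 * (qd (qd I0)) + 20 * L^5 * I0 * (qd I0) + 4 * L^5 * I0^2) = 0 := by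
    simp only [map_add, map_sub, map_mul, map_pow, map_ofNat, qd_const, hc, hI1a0, hI0c]
    norm_num
  have hdP : qd (50 * (qd (qd I0)) * (qd I1a) - 50 * (qd I0) * (qd (qd I1a)) + 20 * (qd I0)^2 - 50 * I1a * (qd (qd (qd I0))) - 50 * I1a * (qd (qd I0)) - 20 * I1a * (qd I0) + 50 * I0 * (qd (qd (qd I1a))) + 50 * I0 * (qd (qd I1a)) + 20 * I0 * (qd I1a) - 40 * I0 * (qd (qd I0)) - 20 * I0 * (qd I0) - 4 * I0^2 - 25 * L^5 * (qd I0)^2 + 50 * L^5 * I1a * (qd (qd I0)) + 20 * L^5 * I1a * (qd I0) - 50 * L^5 * I0 * (qd (qd I1a)) - 20 * L^5 * I0 * (qd I1a) + 50 * L^5 * I0 * (qd (qd I0)) + 20 * L^5 * I0 * (qd I0) + 4 * L^5 * I0^2) = (L^5 - 1) * (50 * (qd (qd I0)) * (qd I1a) - 50 * (qd I0) * (qd (qd I1a)) + 20 * (qd I0)^2 - 50 * I1a * (qd (qd (qd I0))) - 50 * I1a * (qd (qd I0)) - 20 * I1a * (qd I0) + 50 * I0 * (qd (qd (qd I1a)))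 + 50 * I0 * (qd (qd I1a)) + 20 * I0 * (qd I1a) - 40 * I0 * (qd (qd I0)) - 20 * I0 * (qd I0) - 4 * I0^2 - 25 * L^5 * (qd I0)^2 + 50 * L^5 * I1a * (qd (qd I0)) + 20 * L^5 * I1a * (qd I0) - 50 * L^5 * I0 * (qd (qd I1a)) - 20 * L^5 * I0 * (qd I1a) + 50 * L^5 * I0 * (qd (qd I0)) + 20 * L^5 * I0 * (qd I0) + 4 * L^5 * I0^2) := by
    simp only [qd_mul, qd_sub, qd_add, qd_ofNat, qd_zero, qd_sq, qd_pow5, hqdL]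
    linear_combination ((-50 * L^5 * I1a) * hR1' + (50 * I1a * (qd (qd (qd (qd I0)))) + 100 * I1a * (qd (qd (qd I0))) + 70 * I1a * (qd (qd I0)) + 20 * I1a * (qd I0) - 50 * I0 * (qd (qd (qd (qd I1a)))) - 100 * I0 * (qd (qd (qd I1a))) - 70 * I0 * (qd (qd I1a)) - 20 * I0 * (qd I1a) + 40 * I0 * (qd (qd (qd I0))) + 60 * I0 * (qd (qd I0)) + 28 * I0 * (qd I0) + 4 * I0^2) * hL + (10 * L^5 * I0) * hR2' + (25 * L^5 * (qd I0)^2 - 50 * L^5 * I1a * (qd (qd I0)) - 20 * L^5 * I1a * (qd I0) + 50 * L^5 * I0 * (qd (qd I1a)) + 20 * L^5 * I0 * (qd I1a) - 50 * L^5 * I0 * (qd (qd I0)) - 20 * L^5 * I0 * (qd I0) - 4 * L^5 * I0^2 - 25 * L^10 * (qd I0)^2 + 50 * L^10 * I1a * (qd (qd I0)) + 20 * L^10 * I1a * (qd I0) - 50 * L^10 * I0 * (qd (qd I1a)) - 20 * L^10 * I0 * (qd I1a) + 50 * L^10 * I0 * (qd (qd I0)) + 20 * L^10 * I0 * (qd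 I0) + 4 * L^10 * I0^2) * h5)
  have hb0 : PowerSeries.constantCoeff (R := ℚ) ((L^5 - 1 : PowerSeries ℚ)) = 0 := by
    simp [map_pow, hc]
  have hP : (50 * (qd (qd I0)) * (qd I1a) - 50 * (qd I0) * (qd (qd I1a)) + 20 * (qd I0)^2 - 50 * I1a * (qd (qd (qd I0))) - 50 * I1a * (qd (qd I0)) - 20 * I1a * (qd I0) + 50 * I0 * (qd (qd (qd I1a))) + 50 * I0 * (qd (qd I1a)) + 20 * I0 * (qd I1a) - 40 * I0 * (qd (qd I0)) - 20 * I0 * (qd I0) - 4 * I0^2 - 25 * L^5 * (qd I0)^2 + 50 * L^5 * I1a * (qd (qd I0)) + 20 * L^5 * I1a * (qd I0) - 50 * L^5 * I0 * (qd (qd I1a)) - 20 * L^5 * I0 * (qd I1a) + 50 * L^5 * I0 * (qd (qd I0)) + 20 * L^5 * I0 * (qd I0) + 4 * L^5 * I0^2) = 0 := eq_zero_of_qd _ _ hb0 hP0 hdP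
  have hXg1 : Xg L 1 = L⁻¹ * (qd I0 * I0⁻¹ - qd L * L⁻¹) := rfl
  have hXg2 : Xg L 2 = du L (Xg L 1) := rfl
  have hZg1 : Zg L 1 = L⁻¹ * (qd L * L⁻¹ + PowerSeries.C ((1 / 5 : ℚ))) := rfl
  have hZg2 : Zg L 2 = du L (Zg L 1) := rfl
  have hZg3 : Zg L 3 = du L (Zg L 2) := rfl
  have key : ((750 : PowerSeries ℚ) * (L^3 * I0^2)) * (du L (du L (Qg L)))
      = ((750 : PowerSeries ℚ) * (L^3 * I0^2)) * (-2 * Xg L 1 * du L (Qg L)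
        - (4 * Xg L 2 + 2 * (Xg L 1) ^ 2 + PowerSeries.C ((15 / 4 : ℚ)) * Zg L 2) * Qg L
        - PowerSeries.C ((5 / 2 : ℚ)) *
            (2 * Zg L 1 * Xg L 2 + Zg L 1 * (Xg L 1) ^ 2 + Zg L 2 * Xg L 1)
        - PowerSeries.C ((125 / 24 : ℚ)) * Zg L 1 * Zg L 2
        - PowerSeries.C ((5 / 24 : ℚ)) * Zg L 3) := by
    simp only [hXg2, hXg1, hZg3, hZg2, hZg1, du, Qg, I11a, qd_mul, qd_sub, qd_add, qd_neg,
      qd_C, qd_zero, qd_one, qd_ofNat, hqdL, hqdiL, hqdJ]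
    linear_combination (15 * hP + (-7500 * I0^2 * (PowerSeries.C ((1/5 : ℚ)))^3 + 750 * I0^2 * (I0⁻¹) * (qd (qd (qd I1a))) + 3750 * I0^2 * (I0⁻¹) * (qd (qd I1a)) * (PowerSeries.C ((1/5 : ℚ))) + 7500 * I0^2 * (I0⁻¹) * (qd I1a) * (PowerSeries.C ((1/5 : ℚ)))^2 - 3000 * I0^2 * (I0⁻¹) * (qd (qd I0)) * (PowerSeries.C ((1/5 : ℚ))) - 7500 * I0^2 * (I0⁻¹) * (qd I0) * (PowerSeries.C ((1/5 : ℚ)))^2 + 750 * I0^2 * (I0⁻¹)^2 * (qd (qd I0)) * (qd I1a) - 750 * I0^2 * (I0⁻¹)^2 * (qd I0) * (qd (qd I1a)) + 1500 * I0^2 * (I0⁻¹)^2 * (qd I0)^2 * (PowerSeries.C ((1/5 : ℚ))) - 750 * I0^2 * (I0⁻¹)^2 * I1a * (qd (qd (qd I0))) - 3750 * I0^2 * (I0⁻¹)^2 * I1a * (qd (qd I0)) * (PowerSeries.C ((1/5 : ℚ))) - 7500 * I0^2 * (I0⁻¹)^2 * I1a * (qd I0) * (PowerSeries.C ((1/5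 : ℚ)))^2 - 7500 * L * (L⁻¹) * I0^2 * (PowerSeries.C ((1/5 : ℚ)))^3 + 750 * L * (L⁻¹) * I0^2 * (I0⁻¹) * (qd (qd (qd I1a))) + 3750 * L * (L⁻¹) * I0^2 * (I0⁻¹) * (qd (qd I1a)) * (PowerSeries.C ((1/5 : ℚ))) + 7500 * L * (L⁻¹) * I0^2 * (I0⁻¹) * (qd I1a) * (PowerSeries.C ((1/5 : ℚ)))^2 - 3000 * L * (L⁻¹) * I0^2 * (I0⁻¹) * (qd (qd I0)) * (PowerSeries.C ((1/5 : ℚ))) - 7500 * L * (L⁻¹) * I0^2 * (I0⁻¹) * (qd I0) * (PowerSeries.C ((1/5 : ℚ)))^2 + 750 * L * (L⁻¹) * I0^2 * (I0⁻¹)^2 * (qd (qd I0)) * (qd I1a) - 750 * L * (L⁻¹) * I0^2 * (I0⁻¹)^2 * (qd I0) * (qd (qd I1a)) + 1500 * L * (L⁻¹) * I0^2 * (I0⁻¹)^2 * (qd I0)^2 * (PowerSeries.C ((1/5 : ℚ))) - 750 * L * (L⁻¹) * I0^2 * (I0⁻¹)^2 * I1a * (qd (qd (qd I0))) - 3750 *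 L * (L⁻¹) * I0^2 * (I0⁻¹)^2 * I1a * (qd (qd I0)) * (PowerSeries.C ((1/5 : ℚ))) - 7500 * L * (L⁻¹) * I0^2 * (I0⁻¹)^2 * I1a * (qd I0) * (PowerSeries.C ((1/5 : ℚ)))^2 - 7500 * L^2 * (L⁻¹)^2 * I0^2 * (PowerSeries.C ((1/5 : ℚ)))^3 + 750 * L^2 * (L⁻¹)^2 * I0^2 * (I0⁻¹) * (qd (qd (qd I1a))) + 3750 * L^2 * (L⁻¹)^2 * I0^2 * (I0⁻¹) * (qd (qd I1a)) * (PowerSeries.C ((1/5 : ℚ))) + 7500 * L^2 * (L⁻¹)^2 * I0^2 * (I0⁻¹) * (qd I1a) * (PowerSeries.C ((1/5 : ℚ)))^2 - 3000 * L^2 * (L⁻¹)^2 * I0^2 * (I0⁻¹) * (qd (qd I0)) * (PowerSeries.C ((1/5 : ℚ))) - 7500 * L^2 * (L⁻¹)^2 * I0^2 * (I0⁻¹) * (qd I0) * (PowerSeries.C ((1/5 : ℚ)))^2 + 750 * L^2 * (L⁻¹)^2 * I0^2 * (I0⁻¹)^2 * (qd (qd I0)) * (qd I1a) - 750 * L^2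 * (L⁻¹)^2 * I0^2 * (I0⁻¹)^2 * (qd I0) * (qd (qd I1a)) + 1500 * L^2 * (L⁻¹)^2 * I0^2 * (I0⁻¹)^2 * (qd I0)^2 * (PowerSeries.C ((1/5 : ℚ))) - 750 * L^2 * (L⁻¹)^2 * I0^2 * (I0⁻¹)^2 * I1a * (qd (qd (qd I0))) - 3750 * L^2 * (L⁻¹)^2 * I0^2 * (I0⁻¹)^2 * I1a * (qd (qd I0)) * (PowerSeries.C ((1/5 : ℚ))) - 7500 * L^2 * (L⁻¹)^2 * I0^2 * (I0⁻¹)^2 * I1a * (qd I0) * (PowerSeries.C ((1/5 : ℚ)))^2 - 6000 * L^3 * (L⁻¹)^3 * I0^2 * (PowerSeries.C ((1/5 : ℚ)))^3 - 1500 * L^3 * (L⁻¹)^3 * I0^2 * (PowerSeries.C ((1/5 : ℚ)))^3 * (PowerSeries.C ((5/24 : ℚ))) - 750 * L^3 * (L⁻¹)^3 * I0^2 * (PowerSeries.C ((1/5 : ℚ)))^3 * (PowerSeries.C ((125/24 : ℚ))) + 750 * L^3 * (L⁻¹)^3 * I0^2 * (PowerSeries.C ((1/5 : ℚ)))^3 *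 (PowerSeries.C ((15/4 : ℚ))) + 1500 * L^3 * (L⁻¹)^3 * I0^2 * (I0⁻¹) * (qd (qd I1a)) * (PowerSeries.C ((1/5 : ℚ))) + 6000 * L^3 * (L⁻¹)^3 * I0^2 * (I0⁻¹) * (qd I1a) * (PowerSeries.C ((1/5 : ℚ)))^2 - 750 * L^3 * (L⁻¹)^3 * I0^2 * (I0⁻¹) * (qd I1a) * (PowerSeries.C ((1/5 : ℚ)))^2 * (PowerSeries.C ((15/4 : ℚ))) - 1500 * L^3 * (L⁻¹)^3 * I0^2 * (I0⁻¹) * (qd (qd I0)) * (PowerSeries.C ((1/5 : ℚ))) * (PowerSeries.C ((5/2 : ℚ))) - 3000 * L^3 * (L⁻¹)^3 * I0^2 * (I0⁻¹) * (qd I0) * (PowerSeries.C ((1/5 : ℚ)))^2 - 2250 * L^3 * (L⁻¹)^3 * I0^2 * (I0⁻¹) * (qd I0) * (PowerSeries.C ((1/5 : ℚ)))^2 * (PowerSeries.C ((5/2 : ℚ))) + 750 * L^3 * (L⁻¹)^3 * I0^2 * (I0⁻¹)^2 * (qd I0)^2 * (PowerSeries.C ((1/5 : ℚ))) * (PowerSeries.C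 ((5/2 : ℚ))) - 1500 * L^3 * (L⁻¹)^3 * I0^2 * (I0⁻¹)^2 * I1a * (qd (qd I0)) * (PowerSeries.C ((1/5 : ℚ))) - 6000 * L^3 * (L⁻¹)^3 * I0^2 * (I0⁻¹)^2 * I1a * (qd I0) * (PowerSeries.C ((1/5 : ℚ)))^2 + 750 * L^3 * (L⁻¹)^3 * I0^2 * (I0⁻¹)^2 * I1a * (qd I0) * (PowerSeries.C ((1/5 : ℚ)))^2 * (PowerSeries.C ((15/4 : ℚ))) - 1500 * L^4 * (L⁻¹)^4 * I0^2 * (PowerSeries.C ((1/5 : ℚ)))^3 + 750 * L^4 * (L⁻¹)^4 * I0^2 * (PowerSeries.C ((1/5 : ℚ)))^3 * (PowerSeries.C ((125/24 : ℚ))) - 2250 * L^4 * (L⁻¹)^4 * I0^2 * (PowerSeries.C ((1/5 : ℚ)))^3 * (PowerSeries.C ((5/2 : ℚ))) + 1500 * L^4 * (L⁻¹)^4 * I0^2 * (I0⁻¹) * (qd I1a) * (PowerSeries.C ((1/5 : ℚ)))^2 - 1500 * L^4 * (L⁻¹)^4 * I0^2 * (I0⁻¹) * (qd I0) * (PowerSeries.C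 ((1/5 : ℚ)))^2 * (PowerSeries.C ((5/2 : ℚ))) - 1500 * L^4 * (L⁻¹)^4 * I0^2 * (I0⁻¹)^2 * I1a * (qd I0) * (PowerSeries.C ((1/5 : ℚ)))^2 - 3750 * L^5 * I0^2 * (PowerSeries.C ((1/5 : ℚ)))^3 + 9000 * L^5 * I0^2 * (PowerSeries.C ((1/5 : ℚ)))^3 * (PowerSeries.C ((5/24 : ℚ))) - 750 * L^5 * I0^2 * (PowerSeries.C ((1/5 : ℚ)))^3 * (PowerSeries.C ((5/2 : ℚ))) + 3000 * L^5 * I0^2 * (PowerSeries.C ((1/5 : ℚ)))^3 * (PowerSeries.C ((15/4 : ℚ))) - 3750 * L^5 * I0^2 * (I0⁻¹) * (qd (qd I1a)) * (PowerSeries.C ((1/5 : ℚ))) + 3750 * L^5 * I0^2 * (I0⁻¹) * (qd I1a) * (PowerSeries.C ((1/5 : ℚ)))^2 - 3000 * L^5 * I0^2 * (I0⁻¹) * (qd I1a) * (PowerSeries.C ((1/5 : ℚ)))^2 * (PowerSeries.C ((15/4 : ℚ))) + 1500 * L^5 * I0^2 * (I0⁻¹) * (qd (qd I0)) * (PowerSeries.C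 ((1/5 : ℚ))) * (PowerSeries.C ((5/2 : ℚ))) + 7500 * L^5 * I0^2 * (I0⁻¹) * (qd I0) * (PowerSeries.C ((1/5 : ℚ)))^2 - 750 * L^5 * I0^2 * (I0⁻¹)^2 * (qd I0)^2 * (PowerSeries.C ((1/5 : ℚ))) * (PowerSeries.C ((5/2 : ℚ))) + 3750 * L^5 * I0^2 * (I0⁻¹)^2 * I1a * (qd (qd I0)) * (PowerSeries.C ((1/5 : ℚ))) - 3750 * L^5 * I0^2 * (I0⁻¹)^2 * I1a * (qd I0) * (PowerSeries.C ((1/5 : ℚ)))^2 + 3000 * L^5 * I0^2 * (I0⁻¹)^2 * I1a * (qd I0) * (PowerSeries.C ((1/5 : ℚ)))^2 * (PowerSeries.C ((15/4 : ℚ))) - 750 * L^5 * (L⁻¹)^5 * I0^2 * (PowerSeries.C ((1/5 : ℚ)))^3 * (PowerSeries.C ((5/2 : ℚ))) - 3750 * L^6 * (L⁻¹) * I0^2 * (PowerSeries.C ((1/5 : ℚ)))^3 + 9000 * L^6 * (L⁻¹) * I0^2 * (PowerSeries.C ((1/5 : ℚ)))^3 * (PowerSeries.C ((5/24 : ℚ)))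 - 750 * L^6 * (L⁻¹) * I0^2 * (PowerSeries.C ((1/5 : ℚ)))^3 * (PowerSeries.C ((5/2 : ℚ))) + 3000 * L^6 * (L⁻¹) * I0^2 * (PowerSeries.C ((1/5 : ℚ)))^3 * (PowerSeries.C ((15/4 : ℚ))) - 3750 * L^6 * (L⁻¹) * I0^2 * (I0⁻¹) * (qd (qd I1a)) * (PowerSeries.C ((1/5 : ℚ))) + 3750 * L^6 * (L⁻¹) * I0^2 * (I0⁻¹) * (qd I1a) * (PowerSeries.C ((1/5 : ℚ)))^2 - 3000 * L^6 * (L⁻¹) * I0^2 * (I0⁻¹) * (qd I1a) * (PowerSeries.C ((1/5 : ℚ)))^2 * (PowerSeries.C ((15/4 : ℚ))) + 1500 * L^6 * (L⁻¹) * I0^2 * (I0⁻¹) * (qd (qd I0)) * (PowerSeries.C ((1/5 : ℚ))) * (PowerSeries.C ((5/2 : ℚ))) + 7500 * L^6 * (L⁻¹) * I0^2 * (I0⁻¹) * (qd I0) * (PowerSeries.C ((1/5 : ℚ)))^2 - 750 * L^6 * (L⁻¹) * I0^2 * (I0⁻¹)^2 * (qd I0)^2 * (PowerSeries.C ((1/5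 : ℚ))) * (PowerSeries.C ((5/2 : ℚ))) + 3750 * L^6 * (L⁻¹) * I0^2 * (I0⁻¹)^2 * I1a * (qd (qd I0)) * (PowerSeries.C ((1/5 : ℚ))) - 3750 * L^6 * (L⁻¹) * I0^2 * (I0⁻¹)^2 * I1a * (qd I0) * (PowerSeries.C ((1/5 : ℚ)))^2 + 3000 * L^6 * (L⁻¹) * I0^2 * (I0⁻¹)^2 * I1a * (qd I0) * (PowerSeries.C ((1/5 : ℚ)))^2 * (PowerSeries.C ((15/4 : ℚ))) - 3000 * L^7 * (L⁻¹)^2 * I0^2 * (PowerSeries.C ((1/5 : ℚ)))^3 + 8250 * L^7 * (L⁻¹)^2 * I0^2 * (PowerSeries.C ((1/5 : ℚ)))^3 * (PowerSeries.C ((5/24 : ℚ))) + 750 * L^7 * (L⁻¹)^2 * I0^2 * (PowerSeries.C ((1/5 : ℚ)))^3 * (PowerSeries.C ((125/24 : ℚ))) - 750 * L^7 * (L⁻¹)^2 * I0^2 * (PowerSeries.C ((1/5 : ℚ)))^3 * (PowerSeries.C ((5/2 : ℚ))) + 2250 * L^7 * (L⁻¹)^2 * I0^2 * (PowerSeries.C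 ((1/5 : ℚ)))^3 * (PowerSeries.C ((15/4 : ℚ))) - 1500 * L^7 * (L⁻¹)^2 * I0^2 * (I0⁻¹) * (qd (qd I1a)) * (PowerSeries.C ((1/5 : ℚ))) + 3000 * L^7 * (L⁻¹)^2 * I0^2 * (I0⁻¹) * (qd I1a) * (PowerSeries.C ((1/5 : ℚ)))^2 - 2250 * L^7 * (L⁻¹)^2 * I0^2 * (I0⁻¹) * (qd I1a) * (PowerSeries.C ((1/5 : ℚ)))^2 * (PowerSeries.C ((15/4 : ℚ))) + 1500 * L^7 * (L⁻¹)^2 * I0^2 * (I0⁻¹) * (qd (qd I0)) * (PowerSeries.C ((1/5 : ℚ))) * (PowerSeries.C ((5/2 : ℚ))) + 3000 * L^7 * (L⁻¹)^2 * I0^2 * (I0⁻¹) * (qd I0) * (PowerSeries.C ((1/5 : ℚ)))^2 + 2250 * L^7 * (L⁻¹)^2 * I0^2 * (I0⁻¹) * (qd I0) * (PowerSeries.C ((1/5 : ℚ)))^2 * (PowerSeries.C ((5/2 : ℚ))) - 750 * L^7 * (L⁻¹)^2 * I0^2 * (I0⁻¹)^2 * (qd I0)^2 * (PowerSeries.C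 ((1/5 : ℚ))) * (PowerSeries.C ((5/2 : ℚ))) + 1500 * L^7 * (L⁻¹)^2 * I0^2 * (I0⁻¹)^2 * I1a * (qd (qd I0)) * (PowerSeries.C ((1/5 : ℚ))) - 3000 * L^7 * (L⁻¹)^2 * I0^2 * (I0⁻¹)^2 * I1a * (qd I0) * (PowerSeries.C ((1/5 : ℚ)))^2 + 2250 * L^7 * (L⁻¹)^2 * I0^2 * (I0⁻¹)^2 * I1a * (qd I0) * (PowerSeries.C ((1/5 : ℚ)))^2 * (PowerSeries.C ((15/4 : ℚ))) - 10500 * L^8 * (L⁻¹)^3 * I0^2 * (PowerSeries.C ((1/5 : ℚ)))^3 + 10500 * L^8 * (L⁻¹)^3 * I0^2 * (PowerSeries.C ((1/5 : ℚ)))^3 * (PowerSeries.C ((5/24 : ℚ))) - 1500 * L^8 * (L⁻¹)^3 * I0^2 * (PowerSeries.C ((1/5 : ℚ)))^3 * (PowerSeries.C ((125/24 : ℚ))) + 3000 * L^8 * (L⁻¹)^3 * I0^2 * (PowerSeries.C ((1/5 : ℚ)))^3 * (PowerSeries.C ((5/2 : ℚ))) + 3750 * L^8 * (L⁻¹)^3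 * I0^2 * (PowerSeries.C ((1/5 : ℚ)))^3 * (PowerSeries.C ((15/4 : ℚ))) - 1500 * L^8 * (L⁻¹)^3 * I0^2 * (I0⁻¹) * (qd (qd I1a)) * (PowerSeries.C ((1/5 : ℚ))) + 10500 * L^8 * (L⁻¹)^3 * I0^2 * (I0⁻¹) * (qd I1a) * (PowerSeries.C ((1/5 : ℚ)))^2 - 3750 * L^8 * (L⁻¹)^3 * I0^2 * (I0⁻¹) * (qd I1a) * (PowerSeries.C ((1/5 : ℚ)))^2 * (PowerSeries.C ((15/4 : ℚ))) + 1500 * L^8 * (L⁻¹)^3 * I0^2 * (I0⁻¹) * (qd (qd I0)) * (PowerSeries.C ((1/5 : ℚ))) * (PowerSeries.C ((5/2 : ℚ))) + 3000 * L^8 * (L⁻¹)^3 * I0^2 * (I0⁻¹) * (qd I0) * (PowerSeries.C ((1/5 : ℚ)))^2 - 750 * L^8 * (L⁻¹)^3 * I0^2 * (I0⁻¹) * (qd I0) * (PowerSeries.C ((1/5 : ℚ)))^2 * (PowerSeries.C ((5/2 : ℚ))) - 750 * L^8 * (L⁻¹)^3 * I0^2 * (I0⁻¹)^2 * (qd I0)^2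 * (PowerSeries.C ((1/5 : ℚ))) * (PowerSeries.C ((5/2 : ℚ))) + 1500 * L^8 * (L⁻¹)^3 * I0^2 * (I0⁻¹)^2 * I1a * (qd (qd I0)) * (PowerSeries.C ((1/5 : ℚ))) - 10500 * L^8 * (L⁻¹)^3 * I0^2 * (I0⁻¹)^2 * I1a * (qd I0) * (PowerSeries.C ((1/5 : ℚ)))^2 + 3750 * L^8 * (L⁻¹)^3 * I0^2 * (I0⁻¹)^2 * I1a * (qd I0) * (PowerSeries.C ((1/5 : ℚ)))^2 * (PowerSeries.C ((15/4 : ℚ))) + 3000 * L^9 * (L⁻¹)^4 * I0^2 * (PowerSeries.C ((1/5 : ℚ)))^3 + 3000 * L^9 * (L⁻¹)^4 * I0^2 * (PowerSeries.C ((1/5 : ℚ)))^3 * (PowerSeries.C ((125/24 : ℚ))) - 8250 * L^9 * (L⁻¹)^4 * I0^2 * (PowerSeries.C ((1/5 : ℚ)))^3 * (PowerSeries.C ((5/2 : ℚ))) - 3000 * L^9 * (L⁻¹)^4 * I0^2 * (I0⁻¹) * (qd I1a) * (PowerSeries.C ((1/5 : ℚ)))^2 + 3000 * L^9 * (L⁻¹)^4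 * I0^2 * (I0⁻¹) * (qd I0) * (PowerSeries.C ((1/5 : ℚ)))^2 * (PowerSeries.C ((5/2 : ℚ))) + 3000 * L^9 * (L⁻¹)^4 * I0^2 * (I0⁻¹)^2 * I1a * (qd I0) * (PowerSeries.C ((1/5 : ℚ)))^2 + 11250 * L^10 * I0^2 * (PowerSeries.C ((1/5 : ℚ)))^3 - 33000 * L^10 * I0^2 * (PowerSeries.C ((1/5 : ℚ)))^3 * (PowerSeries.C ((5/24 : ℚ))) - 3000 * L^10 * I0^2 * (PowerSeries.C ((1/5 : ℚ)))^3 * (PowerSeries.C ((125/24 : ℚ))) + 9000 * L^10 * I0^2 * (PowerSeries.C ((1/5 : ℚ)))^3 * (PowerSeries.C ((5/2 : ℚ))) - 3000 * L^10 * I0^2 * (PowerSeries.C ((1/5 : ℚ)))^3 * (PowerSeries.C ((15/4 : ℚ))) - 11250 * L^10 * I0^2 * (I0⁻¹) * (qd I1a) * (PowerSeries.C ((1/5 : ℚ)))^2 + 3000 * L^10 * I0^2 * (I0⁻¹) * (qd I1a) * (PowerSeries.C ((1/5 : ℚ)))^2 * (PowerSeries.C ((15/4 : ℚ))) + 11250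 * L^10 * I0^2 * (I0⁻¹)^2 * I1a * (qd I0) * (PowerSeries.C ((1/5 : ℚ)))^2 - 3000 * L^10 * I0^2 * (I0⁻¹)^2 * I1a * (qd I0) * (PowerSeries.C ((1/5 : ℚ)))^2 * (PowerSeries.C ((15/4 : ℚ))) + 2250 * L^10 * (L⁻¹)^5 * I0^2 * (PowerSeries.C ((1/5 : ℚ)))^3 * (PowerSeries.C ((5/2 : ℚ))) + 12000 * L^11 * (L⁻¹) * I0^2 * (PowerSeries.C ((1/5 : ℚ)))^3 - 33750 * L^11 * (L⁻¹) * I0^2 * (PowerSeries.C ((1/5 : ℚ)))^3 * (PowerSeries.C ((5/24 : ℚ))) - 3000 * L^11 * (L⁻¹) * I0^2 * (PowerSeries.C ((1/5 : ℚ)))^3 * (PowerSeries.C ((125/24 : ℚ))) + 9000 * L^11 * (L⁻¹) * I0^2 * (PowerSeries.C ((1/5 : ℚ)))^3 * (PowerSeries.C ((5/2 : ℚ))) - 3000 * L^11 * (L⁻¹) * I0^2 * (PowerSeries.C ((1/5 : ℚ)))^3 * (PowerSeries.C ((15/4 : ℚ))) - 12000 * L^11 * (L⁻¹) * I0^2 *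 (I0⁻¹) * (qd I1a) * (PowerSeries.C ((1/5 : ℚ)))^2 + 3000 * L^11 * (L⁻¹) * I0^2 * (I0⁻¹) * (qd I1a) * (PowerSeries.C ((1/5 : ℚ)))^2 * (PowerSeries.C ((15/4 : ℚ))) + 12000 * L^11 * (L⁻¹) * I0^2 * (I0⁻¹)^2 * I1a * (qd I0) * (PowerSeries.C ((1/5 : ℚ)))^2 - 3000 * L^11 * (L⁻¹) * I0^2 * (I0⁻¹)^2 * I1a * (qd I0) * (PowerSeries.C ((1/5 : ℚ)))^2 * (PowerSeries.C ((15/4 : ℚ))) + 9000 * L^12 * (L⁻¹)^2 * I0^2 * (PowerSeries.C ((1/5 : ℚ)))^3 - 27750 * L^12 * (L⁻¹)^2 * I0^2 * (PowerSeries.C ((1/5 : ℚ)))^3 * (PowerSeries.C ((5/24 : ℚ))) - 3000 * L^12 * (L⁻¹)^2 * I0^2 * (PowerSeries.C ((1/5 : ℚ)))^3 * (PowerSeries.C ((125/24 : ℚ))) + 9000 * L^12 * (L⁻¹)^2 * I0^2 * (PowerSeries.C ((1/5 : ℚ)))^3 * (PowerSeries.C ((5/2 : ℚ))) - 3000 *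 L^12 * (L⁻¹)^2 * I0^2 * (PowerSeries.C ((1/5 : ℚ)))^3 * (PowerSeries.C ((15/4 : ℚ))) - 9000 * L^12 * (L⁻¹)^2 * I0^2 * (I0⁻¹) * (qd I1a) * (PowerSeries.C ((1/5 : ℚ)))^2 + 3000 * L^12 * (L⁻¹)^2 * I0^2 * (I0⁻¹) * (qd I1a) * (PowerSeries.C ((1/5 : ℚ)))^2 * (PowerSeries.C ((15/4 : ℚ))) + 9000 * L^12 * (L⁻¹)^2 * I0^2 * (I0⁻¹)^2 * I1a * (qd I0) * (PowerSeries.C ((1/5 : ℚ)))^2 - 3000 * L^12 * (L⁻¹)^2 * I0^2 * (I0⁻¹)^2 * I1a * (qd I0) * (PowerSeries.C ((1/5 : ℚ)))^2 * (PowerSeries.C ((15/4 : ℚ))) + 16500 * L^13 * (L⁻¹)^3 * I0^2 * (PowerSeries.C ((1/5 : ℚ)))^3 - 58500 * L^13 * (L⁻¹)^3 * I0^2 * (PowerSeries.C ((1/5 : ℚ)))^3 * (PowerSeries.C ((5/24 : ℚ))) - 750 * L^13 * (L⁻¹)^3 * I0^2 * (PowerSeries.C ((1/5 : ℚ)))^3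 * (PowerSeries.C ((125/24 : ℚ))) + 5250 * L^13 * (L⁻¹)^3 * I0^2 * (PowerSeries.C ((1/5 : ℚ)))^3 * (PowerSeries.C ((5/2 : ℚ))) - 4500 * L^13 * (L⁻¹)^3 * I0^2 * (PowerSeries.C ((1/5 : ℚ)))^3 * (PowerSeries.C ((15/4 : ℚ))) - 16500 * L^13 * (L⁻¹)^3 * I0^2 * (I0⁻¹) * (qd I1a) * (PowerSeries.C ((1/5 : ℚ)))^2 + 4500 * L^13 * (L⁻¹)^3 * I0^2 * (I0⁻¹) * (qd I1a) * (PowerSeries.C ((1/5 : ℚ)))^2 * (PowerSeries.C ((15/4 : ℚ))) + 3000 * L^13 * (L⁻¹)^3 * I0^2 * (I0⁻¹) * (qd I0) * (PowerSeries.C ((1/5 : ℚ)))^2 * (PowerSeries.C ((5/2 : ℚ))) + 16500 * L^13 * (L⁻¹)^3 * I0^2 * (I0⁻¹)^2 * I1a * (qd I0) * (PowerSeries.C ((1/5 : ℚ)))^2 - 4500 * L^13 * (L⁻¹)^3 * I0^2 * (I0⁻¹)^2 * I1a * (qd I0) * (PowerSeries.C ((1/5 : ℚ)))^2 * (PowerSeries.C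 ((15/4 : ℚ))) - 1500 * L^14 * (L⁻¹)^4 * I0^2 * (PowerSeries.C ((1/5 : ℚ)))^3 - 8250 * L^14 * (L⁻¹)^4 * I0^2 * (PowerSeries.C ((1/5 : ℚ)))^3 * (PowerSeries.C ((125/24 : ℚ))) + 23250 * L^14 * (L⁻¹)^4 * I0^2 * (PowerSeries.C ((1/5 : ℚ)))^3 * (PowerSeries.C ((5/2 : ℚ))) + 1500 * L^14 * (L⁻¹)^4 * I0^2 * (I0⁻¹) * (qd I1a) * (PowerSeries.C ((1/5 : ℚ)))^2 - 1500 * L^14 * (L⁻¹)^4 * I0^2 * (I0⁻¹) * (qd I0) * (PowerSeries.C ((1/5 : ℚ)))^2 * (PowerSeries.C ((5/2 : ℚ))) - 1500 * L^14 * (L⁻¹)^4 * I0^2 * (I0⁻¹)^2 * I1a * (qd I0) * (PowerSeries.C ((1/5 : ℚ)))^2 + 24000 * L^15 * I0^2 * (PowerSeries.C ((1/5 : ℚ)))^3 * (PowerSeries.C ((5/24 : ℚ))) + 3000 * L^15 * I0^2 * (PowerSeries.C ((1/5 : ℚ)))^3 * (PowerSeries.C ((125/24 : ℚ))) - 8250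 * L^15 * I0^2 * (PowerSeries.C ((1/5 : ℚ)))^3 * (PowerSeries.C ((5/2 : ℚ))) - 2250 * L^15 * (L⁻¹)^5 * I0^2 * (PowerSeries.C ((1/5 : ℚ)))^3 * (PowerSeries.C ((5/2 : ℚ))) + 24000 * L^16 * (L⁻¹) * I0^2 * (PowerSeries.C ((1/5 : ℚ)))^3 * (PowerSeries.C ((5/24 : ℚ))) + 3000 * L^16 * (L⁻¹) * I0^2 * (PowerSeries.C ((1/5 : ℚ)))^3 * (PowerSeries.C ((125/24 : ℚ))) - 8250 * L^16 * (L⁻¹) * I0^2 * (PowerSeries.C ((1/5 : ℚ)))^3 * (PowerSeries.C ((5/2 : ℚ))) + 21000 * L^17 * (L⁻¹)^2 * I0^2 * (PowerSeries.C ((1/5 : ℚ)))^3 * (PowerSeries.C ((5/24 : ℚ))) + 3000 * L^17 * (L⁻¹)^2 * I0^2 * (PowerSeries.C ((1/5 : ℚ)))^3 * (PowerSeries.C ((125/24 : ℚ))) - 8250 * L^17 * (L⁻¹)^2 * I0^2 * (PowerSeries.C ((1/5 : ℚ)))^3 * (PowerSeries.C ((5/2 : ℚ))) + 49500 * L^18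 * (L⁻¹)^3 * I0^2 * (PowerSeries.C ((1/5 : ℚ)))^3 * (PowerSeries.C ((5/24 : ℚ))) + 3000 * L^18 * (L⁻¹)^3 * I0^2 * (PowerSeries.C ((1/5 : ℚ)))^3 * (PowerSeries.C ((125/24 : ℚ))) - 8250 * L^18 * (L⁻¹)^3 * I0^2 * (PowerSeries.C ((1/5 : ℚ)))^3 * (PowerSeries.C ((5/2 : ℚ))) + 4500 * L^19 * (L⁻¹)^4 * I0^2 * (PowerSeries.C ((1/5 : ℚ)))^3 * (PowerSeries.C ((125/24 : ℚ))) - 12750 * L^19 * (L⁻¹)^4 * I0^2 * (PowerSeries.C ((1/5 : ℚ)))^3 * (PowerSeries.C ((5/2 : ℚ))) + 750 * L^20 * (L⁻¹)^5 * I0^2 * (PowerSeries.C ((1/5 : ℚ)))^3 * (PowerSeries.C ((5/2 : ℚ)))) * hu + (750 * (qd (qd I0)) * (qd I1a) - 750 * (qd I0) * (qd (qd I1a)) + 1500 * (qd I0)^2 * (PowerSeries.C ((1/5 : ℚ))) - 750 * I1a * (qd (qd (qd I0))) - 3750 * I1a * (qd (qd I0)) * (PowerSeries.C ((1/5 : ℚ)))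 - 7500 * I1a * (qd I0) * (PowerSeries.C ((1/5 : ℚ)))^2 + 750 * I0 * (qd (qd (qd I1a))) + 3750 * I0 * (qd (qd I1a)) * (PowerSeries.C ((1/5 : ℚ))) + 7500 * I0 * (qd I1a) * (PowerSeries.C ((1/5 : ℚ)))^2 - 3000 * I0 * (qd (qd I0)) * (PowerSeries.C ((1/5 : ℚ))) - 7500 * I0 * (qd I0) * (PowerSeries.C ((1/5 : ℚ)))^2 + 750 * I0 * (I0⁻¹) * (qd (qd I0)) * (qd I1a) - 750 * I0 * (I0⁻¹) * (qd I0) * (qd (qd I1a)) + 1500 * I0 * (I0⁻¹) * (qd I0)^2 * (PowerSeries.C ((1/5 : ℚ))) - 750 * I0 * (I0⁻¹) * I1a * (qd (qd (qd I0))) - 3750 * I0 * (I0⁻¹) * I1a * (qd (qd I0)) * (PowerSeries.C ((1/5 : ℚ))) - 7500 * I0 * (I0⁻¹) * I1a * (qd I0) * (PowerSeries.C ((1/5 : ℚ)))^2 - 750 * L^5 * (qd I0)^2 * (PowerSeries.C ((1/5 : ℚ))) * (PowerSeries.C ((5/2 : ℚ))) + 3750 * L^5 * I1a * (qd (qd I0))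 * (PowerSeries.C ((1/5 : ℚ))) - 3750 * L^5 * I1a * (qd I0) * (PowerSeries.C ((1/5 : ℚ)))^2 + 3000 * L^5 * I1a * (qd I0) * (PowerSeries.C ((1/5 : ℚ)))^2 * (PowerSeries.C ((15/4 : ℚ))) - 3750 * L^5 * I0 * (qd (qd I1a)) * (PowerSeries.C ((1/5 : ℚ))) + 3750 * L^5 * I0 * (qd I1a) * (PowerSeries.C ((1/5 : ℚ)))^2 - 3000 * L^5 * I0 * (qd I1a) * (PowerSeries.C ((1/5 : ℚ)))^2 * (PowerSeries.C ((15/4 : ℚ))) + 1500 * L^5 * I0 * (qd (qd I0)) * (PowerSeries.C ((1/5 : ℚ))) * (PowerSeries.C ((5/2 : ℚ))) + 7500 * L^5 * I0 * (qd I0) * (PowerSeries.C ((1/5 : ℚ)))^2 - 750 * L^5 * I0 * (I0⁻¹) * (qd I0)^2 * (PowerSeries.C ((1/5 : ℚ))) * (PowerSeries.C ((5/2 : ℚ))) + 3750 * L^5 * I0 * (I0⁻¹) * I1a * (qd (qd I0)) * (PowerSeries.C ((1/5 : ℚ))) - 3750 * L^5 * I0 * (I0⁻¹) * I1a * (qd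 I0) * (PowerSeries.C ((1/5 : ℚ)))^2 + 3000 * L^5 * I0 * (I0⁻¹) * I1a * (qd I0) * (PowerSeries.C ((1/5 : ℚ)))^2 * (PowerSeries.C ((15/4 : ℚ))) + 11250 * L^10 * I1a * (qd I0) * (PowerSeries.C ((1/5 : ℚ)))^2 - 3000 * L^10 * I1a * (qd I0) * (PowerSeries.C ((1/5 : ℚ)))^2 * (PowerSeries.C ((15/4 : ℚ))) - 11250 * L^10 * I0 * (qd I1a) * (PowerSeries.C ((1/5 : ℚ)))^2 + 3000 * L^10 * I0 * (qd I1a) * (PowerSeries.C ((1/5 : ℚ)))^2 * (PowerSeries.C ((15/4 : ℚ))) + 11250 * L^10 * I0 * (I0⁻¹) * I1a * (qd I0) * (PowerSeries.C ((1/5 : ℚ)))^2 - 3000 * L^10 * I0 * (I0⁻¹) * I1a * (qd I0) * (PowerSeries.C ((1/5 : ℚ)))^2 * (PowerSeries.C ((15/4 : ℚ)))) * hv + (300 * (qd I0)^2 - 750 * I1a * (qd (qd I0)) - 300 * I1a * (qd I0) - 1500 * I1a * (qd I0) * (PowerSeries.C ((1/5 : ℚ))) + 750 * I0 * (qd (qd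 I1a)) + 300 * I0 * (qd I1a) + 1500 * I0 * (qd I1a) * (PowerSeries.C ((1/5 : ℚ))) - 600 * I0 * (qd (qd I0)) - 300 * I0 * (qd I0) - 1500 * I0 * (qd I0) * (PowerSeries.C ((1/5 : ℚ))) - 60 * I0^2 - 300 * I0^2 * (PowerSeries.C ((1/5 : ℚ))) - 1500 * I0^2 * (PowerSeries.C ((1/5 : ℚ)))^2 - 150 * L^5 * (qd I0)^2 * (PowerSeries.C ((5/2 : ℚ))) + 750 * L^5 * I1a * (qd (qd I0)) - 150 * L^5 * I1a * (qd I0) + 120 * L^5 * I1a * (qd I0) * (PowerSeries.C ((15/4 : ℚ))) - 750 * L^5 * I1a * (qd I0) * (PowerSeries.C ((1/5 : ℚ))) + 600 * L^5 * I1a * (qd I0) * (PowerSeries.C ((1/5 : ℚ))) * (PowerSeries.C ((15/4 : ℚ))) - 750 * L^5 * I0 * (qd (qd I1a)) + 150 * L^5 * I0 * (qd I1a) - 120 * L^5 * I0 * (qd I1a) * (PowerSeries.C ((15/4 : ℚ))) + 750 * L^5 * I0 * (qd I1a) * (PowerSeries.C ((1/5 : ℚ))) - 600 * L^5 * I0 *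 (qd I1a) * (PowerSeries.C ((1/5 : ℚ))) * (PowerSeries.C ((15/4 : ℚ))) + 300 * L^5 * I0 * (qd (qd I0)) * (PowerSeries.C ((5/2 : ℚ))) + 300 * L^5 * I0 * (qd I0) + 1500 * L^5 * I0 * (qd I0) * (PowerSeries.C ((1/5 : ℚ))) - 30 * L^5 * I0^2 + 72 * L^5 * I0^2 * (PowerSeries.C ((5/24 : ℚ))) - 6 * L^5 * I0^2 * (PowerSeries.C ((5/2 : ℚ))) + 24 * L^5 * I0^2 * (PowerSeries.C ((15/4 : ℚ))) - 150 * L^5 * I0^2 * (PowerSeries.C ((1/5 : ℚ))) + 360 * L^5 * I0^2 * (PowerSeries.C ((1/5 : ℚ))) * (PowerSeries.C ((5/24 : ℚ))) - 30 * L^5 * I0^2 * (PowerSeries.C ((1/5 : ℚ))) * (PowerSeries.C ((5/2 : ℚ))) + 120 * L^5 * I0^2 * (PowerSeries.C ((1/5 : ℚ))) * (PowerSeries.C ((15/4 : ℚ))) - 750 * L^5 * I0^2 * (PowerSeries.C ((1/5 : ℚ)))^2 + 1800 * L^5 * I0^2 * (PowerSeries.C ((1/5 : ℚ)))^2 * (PowerSeries.C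 ((5/24 : ℚ))) - 150 * L^5 * I0^2 * (PowerSeries.C ((1/5 : ℚ)))^2 * (PowerSeries.C ((5/2 : ℚ))) + 600 * L^5 * I0^2 * (PowerSeries.C ((1/5 : ℚ)))^2 * (PowerSeries.C ((15/4 : ℚ))) + 450 * L^10 * I1a * (qd I0) - 120 * L^10 * I1a * (qd I0) * (PowerSeries.C ((15/4 : ℚ))) + 2250 * L^10 * I1a * (qd I0) * (PowerSeries.C ((1/5 : ℚ))) - 600 * L^10 * I1a * (qd I0) * (PowerSeries.C ((1/5 : ℚ))) * (PowerSeries.C ((15/4 : ℚ))) - 450 * L^10 * I0 * (qd I1a) + 120 * L^10 * I0 * (qd I1a) * (PowerSeries.C ((15/4 : ℚ))) - 2250 * L^10 * I0 * (qd I1a) * (PowerSeries.C ((1/5 : ℚ))) + 600 * L^10 * I0 * (qd I1a) * (PowerSeries.C ((1/5 : ℚ))) * (PowerSeries.C ((15/4 : ℚ))) + 90 * L^10 * I0^2 - 264 * L^10 * I0^2 * (PowerSeries.C ((5/24 : ℚ))) - 24 * L^10 * I0^2 * (PowerSeries.C ((125/24 : ℚ))) + 72 * L^10 * I0^2 * (PowerSeries.C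 ((5/2 : ℚ))) - 24 * L^10 * I0^2 * (PowerSeries.C ((15/4 : ℚ))) + 450 * L^10 * I0^2 * (PowerSeries.C ((1/5 : ℚ))) - 1320 * L^10 * I0^2 * (PowerSeries.C ((1/5 : ℚ))) * (PowerSeries.C ((5/24 : ℚ))) - 120 * L^10 * I0^2 * (PowerSeries.C ((1/5 : ℚ))) * (PowerSeries.C ((125/24 : ℚ))) + 360 * L^10 * I0^2 * (PowerSeries.C ((1/5 : ℚ))) * (PowerSeries.C ((5/2 : ℚ))) - 120 * L^10 * I0^2 * (PowerSeries.C ((1/5 : ℚ))) * (PowerSeries.C ((15/4 : ℚ))) + 2250 * L^10 * I0^2 * (PowerSeries.C ((1/5 : ℚ)))^2 - 6600 * L^10 * I0^2 * (PowerSeries.C ((1/5 : ℚ)))^2 * (PowerSeries.C ((5/24 : ℚ))) - 600 * L^10 * I0^2 * (PowerSeries.C ((1/5 : ℚ)))^2 * (PowerSeries.C ((125/24 : ℚ))) + 1800 * L^10 * I0^2 * (PowerSeries.C ((1/5 : ℚ)))^2 * (PowerSeries.C ((5/2 : ℚ))) - 600 * L^10 * I0^2 * (PowerSeries.C ((1/5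 : ℚ)))^2 * (PowerSeries.C ((15/4 : ℚ))) + 192 * L^15 * I0^2 * (PowerSeries.C ((5/24 : ℚ))) + 24 * L^15 * I0^2 * (PowerSeries.C ((125/24 : ℚ))) - 66 * L^15 * I0^2 * (PowerSeries.C ((5/2 : ℚ))) + 960 * L^15 * I0^2 * (PowerSeries.C ((1/5 : ℚ))) * (PowerSeries.C ((5/24 : ℚ))) + 120 * L^15 * I0^2 * (PowerSeries.C ((1/5 : ℚ))) * (PowerSeries.C ((125/24 : ℚ))) - 330 * L^15 * I0^2 * (PowerSeries.C ((1/5 : ℚ))) * (PowerSeries.C ((5/2 : ℚ))) + 4800 * L^15 * I0^2 * (PowerSeries.C ((1/5 : ℚ)))^2 * (PowerSeries.C ((5/24 : ℚ))) + 600 * L^15 * I0^2 * (PowerSeries.C ((1/5 : ℚ)))^2 * (PowerSeries.C ((125/24 : ℚ))) - 1650 * L^15 * I0^2 * (PowerSeries.C ((1/5 : ℚ)))^2 * (PowerSeries.C ((5/2 : ℚ)))) * h5 + (3 * L^5 * I0^2 - 11 * L^10 * I0^2 + 8 * L^15 * I0^2) * h524 + (30 * L^5 * I1a * (qd I0) -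 30 * L^5 * I0 * (qd I1a) + 6 * L^5 * I0^2 - 30 * L^10 * I1a * (qd I0) + 30 * L^10 * I0 * (qd I1a) - 6 * L^10 * I0^2) * h154 + (-75 * L^5 * (qd I0)^2 + 150 * L^5 * I0 * (qd (qd I0)) - 3 * L^5 * I0^2 + 36 * L^10 * I0^2 - 33 * L^15 * I0^2) * h52 + (-L^10 * I0^2 + L^15 * I0^2) * h12524)
  have h750 : (750 : PowerSeries ℚ) ≠ 0 := fun h => by
    have := congrArg (PowerSeries.constantCoeff (R := ℚ)) h
    rw [map_ofNat, map_zero] at this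
    norm_num at this
  have hLne : L ≠ 0 := fun h => by rw [h, map_zero] at hc; exact zero_ne_one hc
  have hI0z : I0 ≠ 0 := fun h => by rw [h, map_zero] at hI0c; exact zero_ne_one hI0c
  have hne : ((750 : PowerSeries ℚ) * (L^3 * I0^2)) ≠ 0 :=
    mul_ne_zero h750 (mul_ne_zero (pow_ne_zero _ hLne) (pow_ne_zero _ hI0z))
  exact mul_left_cancel₀ hne key

end
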